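/- Let ℓ be a prime, m ∈ ℕ ∪ {∞} and M ≥ M_1(m), and let K be a field. Let σ' ∈ 𝔤^M(K) be a valuative element and τ' ∈ 𝔤^M(K) an element such that (σ',τ') is a C-pair. Then σ := σ'_m is valuative, and τ := τ'_m lies in D_{v_σ}^m, where v_σ is the coarsest valuation v of K with σ ∈ I_v^m. -/

import Mathlib

open Polynomial

noncomputable section

/-- The coefficient ring `Λ_m`: `ℤ/ℓ^m` for finite `m`, and `ℤ_ℓ` for `m = ∞`. -/
def Lam (ℓ : ℕ) [Fact ℓ.Prime] : ℕ∞ → Type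
  | ⊤ => PadicInt ℓ
  | (m : ℕ) => ZMod (ℓ ^ m)

instance (ℓ : ℕ) [Fact ℓ.Prime] : (m : ℕ∞) → CommRing (Lam ℓ m)
  | ⊤ => inferInstanceAs (CommRing (PadicInt ℓ))
  | (m : ℕ) => inferInstanceAs (CommRing (ZMod (ℓ ^ m)))

/-- The canonical projection `Λ_m → Λ_n` (for `n ≤ m`; junk value `0` otherwise). -/
def LamProj (ℓ : ℕ) [Fact ℓ.Prime] : (m n : ℕ∞) → Lam ℓ m →+ Lam ℓ n
  | ⊤, ⊤ => AddMonoidHom.id _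
  | ⊤, (n : ℕ) => (PadicInt.toZModPow n).toAddMonoidHom
  | (m : ℕ), (n : ℕ) =>
      if h : ℓ ^ n ∣ ℓ ^ m then (ZMod.castHom h (ZMod (ℓ ^ n))).toAddMonoidHom else 0
  | (_ : ℕ), ⊤ => 0

/-- The `ℓ^m`-minimized Galois group `𝔤^m(K) = Hom(Kˣ, Λ_m)`. -/
abbrev gal (ℓ : ℕ) [Fact ℓ.Prime] (m : ℕ∞) (K : Type*) [Field K] : Type _ :=
  Additive Kˣ →+ Lam ℓ m

variable {ℓ : ℕ} [Fact ℓ.Prime] {K : Type*} [Field K]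

open scoped Classical

/-- Evaluation of `σ ∈ 𝔤^m(K)` at a unit of `K`. -/
def galu {m : ℕ∞} (σ : gal ℓ m K) (x : Kˣ) : Lam ℓ m :=
  σ (Additive.ofMul x)

/-- Evaluation of `σ ∈ 𝔤^m(K)` at an arbitrary element of `K` (junk value `0` at `0`). -/
def galApp {m : ℕ∞} (σ : gal ℓ m K) (x : K) : Lam ℓ m :=
  if hx : x ≠ 0 then galu σ (Units.mk0 x hx) else 0

/-- Scalar multiplication of `𝔤^m(K)` by `Λ_m`. -/
def galSmul {m : ℕ∞} (a : Lam ℓ m) (σ : gal ℓ m K) : gal ℓ m K :=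
  AddMonoidHom.mk' (fun x => a * σ x) (by intro x y; simp only [map_add, mul_add])

/-- The canonical map `𝔤^m(K) → 𝔤^n(K)`, `σ ↦ σ_n`. -/
def galProj (m n : ℕ∞) (σ : gal ℓ m K) : gal ℓ n K :=
  (LamProj ℓ m n).comp σ

/-- `(σ,τ)` is a C-pair: `σ(x)·τ(1−x) = σ(1−x)·τ(x)` for all `x ∈ K ∖ {0,1}`. -/
def IsCPair {m : ℕ∞} (σ τ : gal ℓ m K) : Prop :=
  ∀ x : K, x ≠ 0 → x ≠ 1 →
    galApp σ x * galApp τ (1 - x) = galApp σ (1 - x) * galApp τ x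

/-- A subset of `𝔤^m(K)` is a C-set if all pairs of its elements are C-pairs. -/
def IsCSet {m : ℕ∞} (S : Set (gal ℓ m K)) : Prop :=
  ∀ σ ∈ S, ∀ τ ∈ S, IsCPair σ τ

/-- `μ_{c·ℓ^m} ⊂ K`: the polynomial `X^{c·ℓ^m} − 1` splits completely in `K`
(for all finite exponents when `m = ∞`). -/
def MuIn (K : Type*) [Field K] (c ℓ : ℕ) : ℕ∞ → Prop
  | ⊤ => ∀ k : ℕ, Polynomial.Splits ((Polynomial.X ^ (c * ℓ ^ k) - 1 : Polynomial K).map (RingHom.id K))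
  | (N : ℕ) => Polynomial.Splits ((Polynomial.X ^ (c * ℓ ^ N) - 1 : Polynomial K).map (RingHom.id K))

/-- `M_r(n) = (r+1)·n − r`. -/
def Mfun (r : ℕ) : ℕ∞ → ℕ∞
  | ⊤ => ⊤
  | (n : ℕ) => (((r + 1) * n - r : ℕ) : ℕ∞)

/-- `N(n) = M_1((6·ℓ^{3n−2} − 7)·(n−1) + 3n − 2)`. -/
def Nfun (ℓ : ℕ) : ℕ∞ → ℕ∞
  | ⊤ => ⊤
  | (n : ℕ) => Mfun 1 (((6 * ℓ ^ (3 * n - 2) - 7) * (n - 1) + 3 * n - 2 : ℕ) : ℕ∞)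

/-- `R(n) = N(M_2(M_1(n)))`. -/
def Rfun (ℓ : ℕ) (n : ℕ∞) : ℕ∞ :=
  Nfun ℓ (Mfun 2 (Mfun 1 n))

/-- The minimized inertia group `I_v^m` of a valuation (valuation subring) of `K`:
homomorphisms vanishing on the `v`-units. -/
def inertia (ℓ : ℕ) [Fact ℓ.Prime] (m : ℕ∞) (A : ValuationSubring K) : Set (gal ℓ m K) :=
  {σ | ∀ x : Kˣ, A.valuation (x : K) = 1 → galu σ x = 0}

/-- The minimized decomposition group `D_v^m` of a valuation (valuation subring) of `K`:
homomorphisms vanishing on the principal `v`-units `1 + 𝔪_v`. -/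
def decomp (ℓ : ℕ) [Fact ℓ.Prime] (m : ℕ∞) (A : ValuationSubring K) : Set (gal ℓ m K) :=
  {σ | ∀ x : Kˣ, A.valuation ((x : K) - 1) < 1 → galu σ x = 0}

/-- A subgroup of (the units of) a linearly ordered group-with-zero is convex. -/
def IsConvexSub {Γ : Type*} [LinearOrderedCommGroupWithZero Γ] (C : Subgroup Γˣ) : Prop :=
  ∀ γ c : Γˣ, (1 : Γ) ≤ (γ : Γ) → (γ : Γ) ≤ (c : Γ) → c ∈ C → γ ∈ C

/-- A subgroup is `ℓ`-divisible. -/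
def IsLDivisible {Γ : Type*} [LinearOrderedCommGroupWithZero Γ] (ℓ : ℕ) (C : Subgroup Γˣ) :
    Prop :=
  ∀ c ∈ C, ∃ d ∈ C, d ^ ℓ = c

/-- Condition (V1): the value group `vK` contains no nontrivial `ℓ`-divisible convex
subgroups. -/
def NoLDivConvex (ℓ : ℕ) (A : ValuationSubring K) : Prop :=
  ∀ C : Subgroup (A.ValueGroup)ˣ, IsConvexSub C → IsLDivisible ℓ C → C = ⊥

/-- The residue field `Kv` of a valuation. -/
abbrev resField (A : ValuationSubring K) : Type _ := IsLocalRing.ResidueField A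

/-- `τ ∈ 𝔤^m(Kv)` is the element induced by `σ ∈ D_v^m` (i.e. `τ = σ_v`): for every
`v`-unit `x` one has `τ(x̄) = σ(x)`. -/
def Induces {m : ℕ∞} (A : ValuationSubring K) (σ : gal ℓ m K)
    (τ : gal ℓ m (resField A)) : Prop :=
  ∀ (x : Kˣ) (h : A.valuation (x : K) = 1),
    galApp τ (IsLocalRing.residue A ⟨(x : K), (A.valuation_le_one_iff (x : K)).mp h.le⟩) =
      galu σ x

/-- An `m`-visible valuation. -/
def IsVisibleVal (ℓ : ℕ) [Fact ℓ.Prime] (m : ℕ∞) (A : ValuationSubring K) : Prop :=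
  NoLDivConvex ℓ A ∧
  ¬ IsCSet (Set.univ : Set (gal ℓ m (resField A))) ∧
  ∀ B : ValuationSubring (resField A),
    decomp ℓ m B = Set.univ → inertia ℓ m B = {0}

/-- `Σ^⊥ = ∩_{σ ∈ Σ} ker σ ⊆ Kˣ`. -/
def orth {m : ℕ∞} (S : Set (gal ℓ m K)) : Set Kˣ :=
  {x | ∀ σ ∈ S, galu σ x = 0}

/-- `σ` is valuative: `σ ∈ I_v^m` for some valuation `v` of `K`. -/
def IsValuative {m : ℕ∞} (σ : gal ℓ m K) : Prop :=
  ∃ A : ValuationSubring K, σ ∈ inertia ℓ m A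

/-- `V = v_σ` is the coarsest valuation with `σ ∈ I_V^m`. -/
def IsVsigma {m : ℕ∞} (σ : gal ℓ m K) (V : ValuationSubring K) : Prop :=
  σ ∈ inertia ℓ m V ∧ ∀ W : ValuationSubring K, σ ∈ inertia ℓ m W → W ≤ V

/-- `V = v_Σ` is the coarsest valuation with `Σ ⊆ I_V^m`. -/
def IsVSet {m : ℕ∞} (S : Set (gal ℓ m K)) (V : ValuationSubring K) : Prop :=
  S ⊆ inertia ℓ m V ∧ ∀ W : ValuationSubring K, S ⊆ inertia ℓ m W → W ≤ V

/-- The set `D^m_n(Σ)`. -/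
def Dmn (n m : ℕ∞) (S : Set (gal ℓ n K)) : Set (gal ℓ n K) :=
  {τ | ∀ σ ∈ S, ∃ τ₁ τ₂ : gal ℓ n K, ∃ σ' τ' τ₁' τ₂' : gal ℓ m K,
    galProj m n σ' = σ ∧ galProj m n τ' = τ ∧ galProj m n τ₁' = τ₁ ∧ galProj m n τ₂' = τ₂ ∧
    ¬ IsCPair τ₁ τ₂ ∧ IsCPair σ' τ' ∧ IsCPair σ' τ₁' ∧ IsCPair σ' τ₂'}

/-- The set `I^m_n(Σ)`. -/
def Imn (n m : ℕ∞) (S : Set (gal ℓ n K)) : Set (gal ℓ n K) :=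
  {σ | σ ∈ S ∧ ∃ σ' : gal ℓ m K, galProj m n σ' = σ ∧
    ∀ τ ∈ S, ∃ τ' : gal ℓ m K, galProj m n τ' = τ ∧ IsCPair σ' τ'}

/-- `K` is a function field over `k`, i.e. a finitely generated field extension. -/
def IsFunctionField (k K : Type*) [Field k] [Field K] [Algebra k K] : Prop :=
  ∃ s : Finset K, IntermediateField.adjoin k (s : Set K) = ⊤

/-- `trdeg(K|k) = d`. -/
def HasTrdeg (k K : Type*) [Field k] [Field K] [Algebra k K] (d : ℕ) : Prop :=
  ∃ b : Fin d → K, IsTranscendenceBasis k b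


/-- The set `ℓ^n·𝔤^m(K)` (interpreted as the trivial subgroup when `n = ∞`). -/
def lPowSet (ℓ : ℕ) [Fact ℓ.Prime] (m : ℕ∞) (K : Type*) [Field K] : ℕ∞ → Set (gal ℓ m K)
  | ⊤ => {0}
  | (k : ℕ) => {x | ∃ σ : gal ℓ m K, x = galSmul ((ℓ : Lam ℓ m) ^ k) σ}

end

noncomputable section CPAux

namespace CPAux

variable {ℓ : ℕ} [Fact ℓ.Prime] {K : Type*} [Field K]

/-! ## Arithmetic of `Lam` -/

theorem nat_div {n N a b : ℕ} (hp : ℓ.Prime) (h1 : 1 ≤ n) (h2 : 2*n - 1 ≤ N)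
    (hdvd : ℓ^N ∣ a * b) (hb : ¬ ℓ^n ∣ b) : ℓ^n ∣ a := by
  have hbne : b ≠ 0 := by rintro rfl; exact hb (dvd_zero _)
  rcases eq_or_ne a 0 with rfl | hane
  · exact dvd_zero _
  · have hab : a * b ≠ 0 := mul_ne_zero hane hbne
    rw [hp.pow_dvd_iff_le_factorization hab] at hdvd
    rw [hp.pow_dvd_iff_le_factorization hbne] at hb
    rw [hp.pow_dvd_iff_le_factorization hane]
    rw [Nat.factorization_mul hane hbne] at hdvd
    simp only [Finsupp.add_apply] at hdvd
    omega

theorem div_lemma (m M : ℕ∞) (hm : 1 ≤ m) (hM : Mfun 1 m ≤ M)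
    (x y : Lam ℓ M) (h : x * y = 0) (hy : LamProj ℓ M m y ≠ 0) :
    LamProj ℓ M m x = 0 := by
  have hp : ℓ.Prime := Fact.out
  cases m with
  | top =>
    have hMt : M = ⊤ := top_le_iff.mp hM
    subst hMt
    rcases (@mul_eq_zero (PadicInt ℓ) _ _ x y).mp h with rfl | rfl
    · exact map_zero _
    · exact absurd (map_zero _) hy
  | coe n =>
    cases M with
    | top =>
      rcases (@mul_eq_zero (PadicInt ℓ) _ _ x y).mp h with rfl | rfl
      · exact map_zero _
      · exact absurd (map_zero _) hy
    | coe N =>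
      have h1 : 1 ≤ n := by exact_mod_cast hm
      have h2 : 2 * n - 1 ≤ N := by
        have : ((2 * n - 1 : ℕ) : ℕ∞) ≤ (N : ℕ∞) := by
          simpa [Mfun] using hM
        exact_mod_cast this
      have hd : ℓ ^ n ∣ ℓ ^ N := pow_dvd_pow ℓ (by omega)
      have hNz : NeZero (ℓ ^ N) := ⟨pow_ne_zero _ hp.ne_zero⟩
      have hnz : NeZero (ℓ ^ n) := ⟨pow_ne_zero _ hp.ne_zero⟩
      have hred : LamProj ℓ (N:ℕ∞) (n:ℕ∞) = (ZMod.castHom hd (ZMod (ℓ^n))).toAddMonoidHom := by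
        show (if h : ℓ ^ n ∣ ℓ ^ N then (ZMod.castHom h (ZMod (ℓ ^ n))).toAddMonoidHom else 0) = _
        rw [dif_pos hd]
      rw [hred] at hy ⊢
      have key : ∀ z : ZMod (ℓ^N), (ZMod.castHom hd (ZMod (ℓ^n))) z = ((z.val : ℕ) : ZMod (ℓ^n)) := by
        intro z
        conv_lhs => rw [← ZMod.natCast_rightInverse z]
        rw [map_natCast]
      have hxy : (x : ZMod (ℓ^N)) * y = 0 := h
      have hdvd : ℓ^N ∣ (ZMod.val (x : ZMod (ℓ^N))) * (ZMod.val (y : ZMod (ℓ^N))) := by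
        apply Nat.dvd_of_mod_eq_zero
        have := ZMod.val_mul (x : ZMod (ℓ^N)) y
        exact this.symm.trans ((congrArg (ZMod.val (n := ℓ^N)) hxy).trans ZMod.val_zero)
      have hyv : ¬ ℓ^n ∣ (ZMod.val (y : ZMod (ℓ^N))) := by
        intro hdv
        apply hy
        show (ZMod.castHom hd (ZMod (ℓ^n))) (y : ZMod (ℓ^N)) = 0
        rw [key y]
        exact (ZMod.natCast_eq_zero_iff _ _).mpr hdv
      show (ZMod.castHom hd (ZMod (ℓ^n))) (x : ZMod (ℓ^N)) = 0
      rw [key x]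
      exact (ZMod.natCast_eq_zero_iff _ _).mpr (nat_div hp h1 h2 hdvd hyv)

/-! ## Basic lemmas on `galu` and `galApp` -/

theorem galu_mul {m : ℕ∞} (σ : gal ℓ m K) (x y : Kˣ) :
    galu σ (x * y) = galu σ x + galu σ y := by
  unfold galu
  rw [ofMul_mul, map_add]

theorem galu_one {m : ℕ∞} (σ : gal ℓ m K) : galu σ 1 = 0 := by
  unfold galu
  rw [ofMul_one, map_zero]

theorem galu_inv {m : ℕ∞} (σ : gal ℓ m K) (x : Kˣ) : galu σ x⁻¹ = - galu σ x := by
  unfold galu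
  rw [ofMul_inv, map_neg]

theorem galApp_unit {m : ℕ∞} (σ : gal ℓ m K) (x : Kˣ) : galApp σ (x:K) = galu σ x := by
  unfold galApp
  rw [dif_pos x.ne_zero]
  congr 1
  exact Units.ext rfl

theorem galApp_mul {m : ℕ∞} (σ : gal ℓ m K) {x y : K} (hx : x ≠ 0) (hy : y ≠ 0) :
    galApp σ (x * y) = galApp σ x + galApp σ y := by
  unfold galApp
  rw [dif_pos (mul_ne_zero hx hy), dif_pos hx, dif_pos hy, ← galu_mul]
  congr 1
  exact Units.ext rfl

theorem galu_proj {m M : ℕ∞} (σ' : gal ℓ M K) (x : Kˣ) :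
    galu (galProj M m σ') x = LamProj ℓ M m (galu σ' x) := rfl

end CPAux
end CPAux
noncomputable section CPAux2
namespace CPAux

variable {ℓ : ℕ} [Fact ℓ.Prime] {K : Type*} [Field K]

/-! ## Valuation helpers -/

theorem div_lt_one_of {G : Type*} [LinearOrderedCommGroupWithZero G] {a b : G}
    (ha : a ≤ 1) (hb : 1 < b) : a / b < 1 := by
  rw [div_eq_mul_inv]
  calc a * b⁻¹ ≤ 1 * b⁻¹ := mul_le_mul_left ha _
  _ = b⁻¹ := one_mul _
  _ < 1 := (inv_lt_one₀ (lt_trans zero_lt_one hb)).mpr hb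


theorem val_pos (A : ValuationSubring K) (x : Kˣ) : (0:A.ValueGroup) < A.valuation (x:K) :=
  zero_lt_iff.mpr ((Valuation.ne_zero_iff _).mpr x.ne_zero)

theorem val_unit_iff (A : ValuationSubring K) (x : Kˣ) :
    A.valuation (x:K) = 1 ↔ ((x:K) ∈ A ∧ ((x:K))⁻¹ ∈ A) := by
  constructor
  · intro h
    refine ⟨(A.valuation_le_one_iff _).1 h.le, (A.valuation_le_one_iff _).1 ?_⟩
    rw [map_inv₀, h, inv_one]
  · rintro ⟨h1, h2⟩
    have h1' := (A.valuation_le_one_iff _).2 h1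
    have h2' := (A.valuation_le_one_iff _).2 h2
    rw [map_inv₀] at h2'
    exact le_antisymm h1' ((inv_le_one₀ (val_pos A x)).mp h2')

/-- If `A ≤ V` then elements of small `V`-valuation have small `A`-valuation. -/
theorem val_lt_one_mono {A V : ValuationSubring K} (h : A ≤ V) (x : Kˣ)
    (hx : V.valuation (x:K) < 1) : A.valuation (x:K) < 1 := by
  by_contra hc
  push_neg at hc
  have h2 : A.valuation ((x:K))⁻¹ ≤ 1 := by
    rw [map_inv₀]
    exact (inv_le_one₀ (val_pos A x)).mpr hc
  have h3 : ((x:K))⁻¹ ∈ V := h ((A.valuation_le_one_iff _).1 h2)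
  have h4 : V.valuation ((x:K))⁻¹ ≤ 1 := (V.valuation_le_one_iff _).2 h3
  rw [map_inv₀] at h4
  exact absurd ((inv_le_one₀ (val_pos V x)).mp h4) (not_le.mpr hx)

/-- The inertia condition as a plain predicate. -/
def Inert {m : ℕ∞} (σ : gal ℓ m K) (W : ValuationSubring K) : Prop :=
  ∀ x : Kˣ, W.valuation (x:K) = 1 → galu σ x = 0

theorem inert_proj {m M : ℕ∞} {σ' : gal ℓ M K} {A : ValuationSubring K} (h : Inert σ' A) :
    Inert (galProj M m σ') A := by
  intro x hx
  rw [galu_proj, h x hx, map_zero]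

/-! ## The seed of an incomparable pair -/

theorem seed_exists (B C : ValuationSubring K) (hBC : ¬ B ≤ C) (hCB : ¬ C ≤ B) :
    ∃ u : Kˣ, B.valuation ((u:K) - 1) < 1 ∧ C.valuation (u:K) < 1 := by
  obtain ⟨c, hcC, hcB⟩ := SetLike.not_le_iff_exists.mp hCB
  obtain ⟨β, hβB, hβC⟩ := SetLike.not_le_iff_exists.mp hBC
  have hcB' : 1 < B.valuation c := not_le.mp (fun h => hcB ((B.valuation_le_one_iff _).1 h))
  have hcC' : C.valuation c ≤ 1 := (C.valuation_le_one_iff _).2 hcC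
  have hβC' : 1 < C.valuation β := not_le.mp (fun h => hβC ((C.valuation_le_one_iff _).1 h))
  have hβB' : B.valuation β ≤ 1 := (B.valuation_le_one_iff _).2 hβB
  have hβc_B : B.valuation (β + c) = B.valuation c :=
    B.valuation.map_add_eq_of_lt_right (lt_of_le_of_lt hβB' hcB')
  have hβc_C : C.valuation (β + c) = C.valuation β :=
    C.valuation.map_add_eq_of_lt_left (lt_of_le_of_lt hcC' hβC')
  have h1c_B : B.valuation (1 + c) = B.valuation c :=
    B.valuation.map_add_eq_of_lt_right (by rw [map_one]; exact hcB')
  have h1c_C : C.valuation (1 + c) ≤ 1 := by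
    refine le_trans (C.valuation.map_add 1 c) (max_le ?_ hcC')
    rw [map_one]
  have hcpos : (0 : B.ValueGroup) < B.valuation c := lt_trans zero_lt_one hcB'
  have hc0 : B.valuation c ≠ 0 := ne_of_gt hcpos
  have hβc0 : (β + c) ≠ 0 := by
    intro h
    rw [h, map_zero] at hβc_B
    exact hc0 hβc_B.symm
  have h1c0 : (1 + c) ≠ 0 := by
    intro h
    rw [h, map_zero] at h1c_B
    exact hc0 h1c_B.symm
  refine ⟨Units.mk0 ((1+c)/(β+c)) (div_ne_zero h1c0 hβc0), ?_, ?_⟩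
  · have heq : ((1+c)/(β+c)) - 1 = (1 - β)/(β+c) := by
      rw [div_sub_one hβc0]
      congr 1
      ring
    show B.valuation (((1+c)/(β+c)) - 1) < 1
    rw [heq, B.valuation.map_div, hβc_B]
    have hnum : B.valuation (1 - β) ≤ 1 := by
      refine le_trans (B.valuation.map_sub 1 β) (max_le ?_ hβB')
      rw [map_one]
    exact div_lt_one_of hnum hcB'
  · show C.valuation ((1+c)/(β+c)) < 1
    rw [C.valuation.map_div, hβc_C]
    exact div_lt_one_of h1c_C hβC'

end CPAux
end CPAux2
noncomputable section CPAux3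
namespace CPAux

variable {ℓ : ℕ} [Fact ℓ.Prime] {K : Type*} [Field K]

/-! ## The auxiliary ring `E` (convex closure construction) -/

/-- The subring of elements whose `C`-valuation is bounded by that of some `B`-unit. -/
def Ering (B C : ValuationSubring K) : ValuationSubring K where
  carrier := {z : K | ∃ b : Kˣ, B.valuation (b:K) = 1 ∧ C.valuation z ≤ C.valuation (b:K)}
  zero_mem' := ⟨1, by simp, by simp⟩
  one_mem' := ⟨1, by simp, le_rfl⟩
  add_mem' := by
    rintro x y ⟨b1, hb1, hx⟩ ⟨b2, hb2, hy⟩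
    rcases le_total (C.valuation (b1:K)) (C.valuation (b2:K)) with h | h
    · exact ⟨b2, hb2, le_trans (C.valuation.map_add x y) (max_le (hx.trans h) hy)⟩
    · exact ⟨b1, hb1, le_trans (C.valuation.map_add x y) (max_le hx (hy.trans h))⟩
  mul_mem' := by
    rintro x y ⟨b1, hb1, hx⟩ ⟨b2, hb2, hy⟩
    refine ⟨b1 * b2, ?_, ?_⟩
    · rw [Units.val_mul, map_mul, hb1, hb2, one_mul]
    · rw [Units.val_mul, map_mul, map_mul]
      exact mul_le_mul' hx hy
  neg_mem' := by
    rintro x ⟨b1, hb1, hx⟩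
    exact ⟨b1, hb1, by rwa [Valuation.map_neg]⟩
  mem_or_inv_mem' := fun x => (C.mem_or_inv_mem x).imp
    (fun h => ⟨1, by simp, by simpa using (C.valuation_le_one_iff _).2 h⟩)
    (fun h => ⟨1, by simp, by simpa using (C.valuation_le_one_iff _).2 h⟩)

theorem mem_Ering_iff (B C : ValuationSubring K) (z : K) :
    z ∈ Ering B C ↔ ∃ b : Kˣ, B.valuation (b:K) = 1 ∧ C.valuation z ≤ C.valuation (b:K) :=
  Iff.rfl

theorem C_le_Ering (B C : ValuationSubring K) : C ≤ Ering B C := fun z hz =>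
  ⟨1, by simp, by simpa using (C.valuation_le_one_iff _).2 hz⟩

theorem B_le_Ering (B C : ValuationSubring K) (u : Kˣ)
    (hu1 : B.valuation ((u:K) - 1) < 1) (hu2 : C.valuation (u:K) < 1) :
    B ≤ Ering B C := by
  intro z hz
  have hzB : B.valuation z ≤ 1 := (B.valuation_le_one_iff _).2 hz
  by_cases h1 : C.valuation z ≤ 1
  · exact ⟨1, by simp, by simpa using h1⟩
  push_neg at h1
  have hz0 : z ≠ 0 := by
    intro h
    rw [h, map_zero] at h1
    exact absurd (zero_le_one.trans_lt h1) (lt_irrefl _)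
  rcases eq_or_lt_of_le hzB with hB1 | hB1
  · exact ⟨Units.mk0 z hz0, hB1, le_rfl⟩
  · -- z has small B-valuation and large C-valuation; use the seed
    have huB : B.valuation (u:K) = 1 := by
      have : B.valuation (((u:K) - 1) + 1) = 1 := by
        rw [B.valuation.map_add_eq_of_lt_right (by rwa [map_one])]
        exact map_one _
      rwa [sub_add_cancel] at this
    have h1z : B.valuation (1 + z) = 1 := by
      rw [B.valuation.map_add_eq_of_lt_left (by rwa [map_one])]
      exact map_one _
    have h1z0 : (1 : K) + z ≠ 0 := by
      intro h
      rw [h, map_zero] at h1z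
      exact zero_ne_one h1z
    have hw0 : (1 + z)/(u:K) ≠ 0 := div_ne_zero h1z0 u.ne_zero
    refine ⟨Units.mk0 _ hw0, ?_, ?_⟩
    · show B.valuation ((1 + z)/(u:K)) = 1
      rw [B.valuation.map_div, h1z, huB, div_one]
    · show C.valuation z ≤ C.valuation ((1 + z)/(u:K))
      rw [C.valuation.map_div]
      have h1zC : C.valuation (1 + z) = C.valuation z :=
        C.valuation.map_add_eq_of_lt_right (by rw [map_one]; exact h1)
      rw [h1zC, div_eq_mul_inv]
      calc C.valuation z = C.valuation z * 1 := (mul_one _).symm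
      _ ≤ C.valuation z * (C.valuation (u:K))⁻¹ :=
          mul_le_mul_right ((one_le_inv₀ (val_pos C u)).mpr hu2.le) _

/-- Convexity: any `C`-value between the value of a `B`-unit and `1` is attained
by a `B`-unit. -/
theorem conv_exists (B C : ValuationSubring K) (z b1 : Kˣ)
    (hb1B : B.valuation (b1:K) = 1) (hb1z : C.valuation (b1:K) ≤ C.valuation (z:K))
    (hz1 : C.valuation (z:K) ≤ 1) :
    ∃ b : Kˣ, B.valuation (b:K) = 1 ∧ C.valuation (b:K) = C.valuation (z:K) := by
  rcases eq_or_lt_of_le hb1z with heq | hlt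
  · exact ⟨b1, hb1B, heq⟩
  rcases lt_trichotomy (B.valuation (z:K)) 1 with hB | hB | hB
  · -- take b := z + b1
    have hv : B.valuation ((z:K) + b1) = 1 := by
      rw [B.valuation.map_add_eq_of_lt_right (by rwa [hb1B])]
      exact hb1B
    have hne : (z:K) + (b1:K) ≠ 0 := by
      intro h
      rw [h, map_zero] at hv
      exact zero_ne_one hv
    refine ⟨Units.mk0 _ hne, hv, ?_⟩
    show C.valuation ((z:K) + b1) = _
    rw [C.valuation.map_add_eq_of_lt_left hlt]
  · exact ⟨z, hB, rfl⟩
  · rcases eq_or_lt_of_le hz1 with h1 | h1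
    · refine ⟨1, by simp, by simp [h1]⟩
    · -- take b := (b1 + z)/(1 + z)
      have hbz : B.valuation ((b1:K) + z) = B.valuation (z:K) :=
        B.valuation.map_add_eq_of_lt_right (by rwa [hb1B])
      have h1zB : B.valuation (1 + (z:K)) = B.valuation (z:K) :=
        B.valuation.map_add_eq_of_lt_right (by rwa [map_one])
      have hz0 : B.valuation (z:K) ≠ 0 := ne_of_gt (val_pos B z)
      have hbz0 : (b1:K) + z ≠ 0 := by
        intro h; rw [h, map_zero] at hbz; exact hz0 hbz.symm
      have h1z0 : (1:K) + z ≠ 0 := by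
        intro h; rw [h, map_zero] at h1zB; exact hz0 h1zB.symm
      have hw0 : ((b1:K) + z)/(1 + (z:K)) ≠ 0 := div_ne_zero hbz0 h1z0
      refine ⟨Units.mk0 _ hw0, ?_, ?_⟩
      · show B.valuation (((b1:K) + z)/(1 + (z:K))) = 1
        rw [B.valuation.map_div, hbz, h1zB, div_self hz0]
      · show C.valuation (((b1:K) + z)/(1 + (z:K))) = _
        rw [C.valuation.map_div]
        have hbzC : C.valuation ((b1:K) + z) = C.valuation (z:K) :=
          C.valuation.map_add_eq_of_lt_right hlt
        have h1zC : C.valuation (1 + (z:K)) = 1 :=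
          (C.valuation.map_add_eq_of_lt_left (by rwa [map_one])).trans (map_one _)
        rw [hbzC, h1zC, div_one]

end CPAux
end CPAux3
noncomputable section CPAux4
namespace CPAux

variable {ℓ : ℕ} [Fact ℓ.Prime] {K : Type*} [Field K]

/-! ## The join of two valuation subrings -/

def Dsup (B C : ValuationSubring K) : ValuationSubring K where
  toSubring := B.toSubring ⊔ C.toSubring
  mem_or_inv_mem' := fun x => (B.mem_or_inv_mem x).imp
    (fun h => (le_sup_left : B.toSubring ≤ B.toSubring ⊔ C.toSubring) h)
    (fun h => (le_sup_left : B.toSubring ≤ B.toSubring ⊔ C.toSubring) h)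

theorem le_Dsup_left (B C : ValuationSubring K) : B ≤ Dsup B C := fun _ hx =>
  (le_sup_left : B.toSubring ≤ B.toSubring ⊔ C.toSubring) hx

theorem le_Dsup_right (B C : ValuationSubring K) : C ≤ Dsup B C := fun _ hx =>
  (le_sup_right : C.toSubring ≤ B.toSubring ⊔ C.toSubring) hx

theorem Dsup_le {B C W : ValuationSubring K} (hB : B ≤ W) (hC : C ≤ W) :
    Dsup B C ≤ W := fun z hz => by
  have : B.toSubring ⊔ C.toSubring ≤ W.toSubring :=
    sup_le (fun a ha => hB ha) (fun a ha => hC ha)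
  exact this hz

/-- Key lemma: if `σ` is inertial at `B` and at `C`, it is inertial at their join. -/
theorem inert_Dsup {m : ℕ∞} (σ : gal ℓ m K) (B C : ValuationSubring K)
    (hB : Inert σ B) (hC : Inert σ C) : Inert σ (Dsup B C) := by
  intro x hx
  obtain ⟨hx1, hx2⟩ := (val_unit_iff _ x).mp hx
  by_cases hBC : B ≤ C
  · have hle : Dsup B C ≤ C := Dsup_le hBC le_rfl
    exact hC x ((val_unit_iff C x).mpr ⟨hle hx1, hle hx2⟩)
  by_cases hCB : C ≤ B
  · have hle : Dsup B C ≤ B := Dsup_le le_rfl hCB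
    exact hB x ((val_unit_iff B x).mpr ⟨hle hx1, hle hx2⟩)
  -- incomparable case
  obtain ⟨u, hu1, hu2⟩ := seed_exists B C hBC hCB
  have hle : Dsup B C ≤ Ering B C := Dsup_le (B_le_Ering B C u hu1 hu2) (C_le_Ering B C)
  have half : ∀ y : Kˣ, C.valuation (y:K) ≤ 1 → (y:K) ∈ Ering B C →
      ((y:K))⁻¹ ∈ Ering B C → galu σ y = 0 := by
    intro y hy1 hyE hyE'
    obtain ⟨b2, hb2B, hb2⟩ := hyE'
    have hb2' : C.valuation ((b2⁻¹ : Kˣ):K) ≤ C.valuation (y:K) := by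
      rw [Units.val_inv_eq_inv_val, map_inv₀]
      rw [map_inv₀] at hb2
      rw [← inv_inv (C.valuation (y:K))]
      exact (inv_le_inv₀ (val_pos C b2)
        (zero_lt_iff.mpr (inv_ne_zero (ne_of_gt (val_pos C y))))).mpr hb2
    have hb2B' : B.valuation ((b2⁻¹ : Kˣ):K) = 1 := by
      rw [Units.val_inv_eq_inv_val, map_inv₀, hb2B, inv_one]
    obtain ⟨b, hbB, hbz⟩ := conv_exists B C y b2⁻¹ hb2B' hb2' hy1
    have h1 : galu σ b = 0 := hB b hbB
    have h2 : galu σ (y * b⁻¹) = 0 := by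
      apply hC
      rw [Units.val_mul, map_mul, Units.val_inv_eq_inv_val, map_inv₀, hbz,
        mul_inv_cancel₀ (ne_of_gt (val_pos C y))]
    have := galu_mul σ (y * b⁻¹) b
    rw [inv_mul_cancel_right, h1, h2, add_zero] at this
    exact this
  rcases le_or_gt (C.valuation (x:K)) 1 with h | h
  · exact half x h (hle hx1) (hle hx2)
  · have e1 : ((x⁻¹ : Kˣ):K) = ((x:K))⁻¹ := Units.val_inv_eq_inv_val x
    have hxinv : galu σ x⁻¹ = 0 := by
      apply half x⁻¹
      · rw [e1, map_inv₀]
        exact (inv_le_one₀ (val_pos C x)).mpr h.le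
      · rw [e1]; exact hle hx2
      · rw [e1, inv_inv]; exact hle hx1
    rw [galu_inv] at hxinv
    exact neg_eq_zero.mp hxinv

/-! ## The maximal ring `V` -/

def Vmax {m : ℕ∞} (σ : gal ℓ m K) (A : ValuationSubring K) (hA : Inert σ A) :
    ValuationSubring K where
  carrier := {x : K | ∃ W : ValuationSubring K, Inert σ W ∧ x ∈ W}
  zero_mem' := ⟨A, hA, zero_mem _⟩
  one_mem' := ⟨A, hA, one_mem _⟩
  add_mem' := by
    rintro x y ⟨W1, h1, hx⟩ ⟨W2, h2, hy⟩
    exact ⟨Dsup W1 W2, inert_Dsup σ W1 W2 h1 h2,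
      add_mem (le_Dsup_left W1 W2 hx) (le_Dsup_right W1 W2 hy)⟩
  mul_mem' := by
    rintro x y ⟨W1, h1, hx⟩ ⟨W2, h2, hy⟩
    exact ⟨Dsup W1 W2, inert_Dsup σ W1 W2 h1 h2,
      mul_mem (le_Dsup_left W1 W2 hx) (le_Dsup_right W1 W2 hy)⟩
  neg_mem' := by
    rintro x ⟨W1, h1, hx⟩
    exact ⟨W1, h1, neg_mem hx⟩
  mem_or_inv_mem' := fun x => (A.mem_or_inv_mem x).imp
    (fun h => ⟨A, hA, h⟩) (fun h => ⟨A, hA, h⟩)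

theorem le_Vmax {m : ℕ∞} (σ : gal ℓ m K) (A : ValuationSubring K) (hA : Inert σ A)
    (W : ValuationSubring K) (hW : Inert σ W) : W ≤ Vmax σ A hA := fun z hz => ⟨W, hW, hz⟩

theorem inert_Vmax {m : ℕ∞} (σ : gal ℓ m K) (A : ValuationSubring K) (hA : Inert σ A) :
    Inert σ (Vmax σ A hA) := by
  intro x hx
  obtain ⟨hx1, hx2⟩ := (val_unit_iff _ x).mp hx
  obtain ⟨W1, h1, hm1⟩ := hx1
  obtain ⟨W2, h2, hm2⟩ := hx2
  have hD : Inert σ (Dsup W1 W2) := inert_Dsup σ W1 W2 h1 h2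
  exact hD x ((val_unit_iff _ x).mpr
    ⟨le_Dsup_left W1 W2 hm1, le_Dsup_right W1 W2 hm2⟩)

end CPAux
end CPAux4
noncomputable section CPAux5
namespace CPAux

variable {ℓ : ℕ} [Fact ℓ.Prime] {K : Type*} [Field K]

/-! ## The hull ring of a value `γ ≥ 1` -/

def Hring (A : ValuationSubring K) (γ : A.ValueGroup) (hγ : 1 ≤ γ) :
    ValuationSubring K where
  carrier := {z : K | ∃ n : ℕ, A.valuation z ≤ γ ^ n}
  zero_mem' := ⟨0, by simp⟩
  one_mem' := ⟨0, by simp⟩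
  add_mem' := by
    rintro x y ⟨n1, hx⟩ ⟨n2, hy⟩
    refine ⟨max n1 n2, le_trans (A.valuation.map_add x y) (max_le ?_ ?_)⟩
    · exact hx.trans (pow_le_pow_right' hγ (le_max_left _ _))
    · exact hy.trans (pow_le_pow_right' hγ (le_max_right _ _))
  mul_mem' := by
    rintro x y ⟨n1, hx⟩ ⟨n2, hy⟩
    refine ⟨n1 + n2, ?_⟩
    rw [map_mul, pow_add]
    exact mul_le_mul' hx hy
  neg_mem' := by
    rintro x ⟨n1, hx⟩
    exact ⟨n1, by rwa [Valuation.map_neg]⟩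
  mem_or_inv_mem' := fun x => (A.mem_or_inv_mem x).imp
    (fun h => ⟨0, by simpa using (A.valuation_le_one_iff _).2 h⟩)
    (fun h => ⟨0, by simpa using (A.valuation_le_one_iff _).2 h⟩)

/-! ## The key "case 2" lemma -/

theorem case2 {m M : ℕ∞} (hm : 1 ≤ m) (hM : Mfun 1 m ≤ M)
    (A : ValuationSubring K) (σ' τ' : gal ℓ M K)
    (hA : Inert σ' A) (hCp : IsCPair σ' τ')
    (b : Kˣ) (hb : A.valuation (b:K) < 1)
    (hτ : LamProj ℓ M m (galApp τ' (1 - (b:K))) ≠ 0) :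
    ∃ E : ValuationSubring K, Inert (galProj M m σ') E ∧ ((b:K))⁻¹ ∈ E := by
  set σ : gal ℓ m K := galProj M m σ' with hσdef
  have hAm : Inert σ A := inert_proj hA
  -- the basic C-pair consequence
  have hii : ∀ a : Kˣ, A.valuation (a:K) < 1 →
      LamProj ℓ M m (galApp τ' (1 - (a:K))) ≠ 0 → galu σ a = 0 := by
    intro a ha hta
    have ha0 : (a:K) ≠ 0 := a.ne_zero
    have ha1 : (a:K) ≠ 1 := by
      intro h
      rw [h, map_one] at ha
      exact lt_irrefl _ ha
    have h1a : A.valuation (1 - (a:K)) = 1 := by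
      rw [sub_eq_add_neg,
        A.valuation.map_add_eq_of_lt_left (by rw [Valuation.map_neg, map_one]; exact ha)]
      exact map_one _
    have h1a0 : (1 : K) - (a:K) ≠ 0 := by
      intro h
      rw [h, map_zero] at h1a
      exact zero_ne_one h1a
    have hσ1a : galApp σ' (1 - (a:K)) = 0 := by
      unfold galApp
      rw [dif_pos h1a0]
      exact hA _ h1a
    have hcp := hCp (a:K) ha0 ha1
    rw [hσ1a, zero_mul] at hcp
    have := div_lemma m M hm hM _ _ hcp hta
    show LamProj ℓ M m (galu σ' a) = 0
    rwa [← galApp_unit]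
  set γb := A.valuation (b:K) with hγb
  have hγb0 : γb ≠ 0 := ne_of_gt (val_pos A b)
  have hγbpos : (0 : A.ValueGroup) < γb := val_pos A b
  have hσb : galu σ b = 0 := hii b hb hτ
  have hb1ne : (1:K) - (b:K) ≠ 0 := by
    intro h
    have : A.valuation (1 - (b:K)) = 1 := by
      rw [sub_eq_add_neg,
        A.valuation.map_add_eq_of_lt_left (by rw [Valuation.map_neg, map_one]; exact hb)]
      exact map_one _
    rw [h, map_zero] at this
    exact zero_ne_one this
  have claim : ∀ n : ℕ, ∀ z : Kˣ, γb ^ n ≤ A.valuation (z:K) →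
      A.valuation (z:K) ≤ 1 → galu σ z = 0 := by
    intro n
    induction n with
    | zero =>
      intro z h1 h2
      exact hAm z (le_antisymm h2 (by simpa using h1))
    | succ n ih =>
      intro z h1 h2
      have hvzpos := val_pos A z
      have hvz0 : A.valuation (z:K) ≠ 0 := ne_of_gt hvzpos
      rcases lt_trichotomy (A.valuation (z:K)) γb with hlt | heq | hgt
      · -- divide by b and use the inductive hypothesis
        have hz' : A.valuation ((z * b⁻¹ : Kˣ):K) = A.valuation (z:K) / γb := by
          rw [Units.val_mul, map_mul, Units.val_inv_eq_inv_val, map_inv₀, div_eq_mul_inv]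
        have hub : galu σ (z * b⁻¹) = 0 := by
          apply ih
          · rw [hz', le_div_iff₀ hγbpos, ← pow_succ]
            exact h1
          · rw [hz', div_le_one₀ hγbpos]
            exact hlt.le
        have hsplit := galu_mul σ (z * b⁻¹) b
        rw [inv_mul_cancel_right, hub, hσb, add_zero] at hsplit
        exact hsplit
      · -- v z = γb
        have hub : galu σ (z * b⁻¹) = 0 := by
          apply hAm
          rw [Units.val_mul, map_mul, Units.val_inv_eq_inv_val, map_inv₀, ← hγb, ← heq,
            mul_inv_cancel₀ hvz0]
        have hsplit := galu_mul σ (z * b⁻¹) b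
        rw [inv_mul_cancel_right, hub, hσb, add_zero] at hsplit
        exact hsplit
      · -- γb < v z ≤ 1
        rcases eq_or_lt_of_le h2 with h2' | h2'
        · exact hAm z h2'
        · by_cases hτz : LamProj ℓ M m (galApp τ' (1 - (z:K))) = 0
          · -- use the auxiliary element c = z + b(1-z)
            have hvz1 : A.valuation (1 - (z:K)) = 1 := by
              rw [sub_eq_add_neg,
                A.valuation.map_add_eq_of_lt_left
                  (by rw [Valuation.map_neg, map_one]; exact h2')]
              exact map_one _
            have hz1ne : (1:K) - (z:K) ≠ 0 := by
              intro h
              rw [h, map_zero] at hvz1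
              exact zero_ne_one hvz1
            set cK : K := (z:K) + (b:K) * (1 - (z:K)) with hcK
            have hvbz : A.valuation ((b:K) * (1 - (z:K))) = γb := by
              rw [map_mul, hvz1, mul_one]
            have hvc : A.valuation cK = A.valuation (z:K) := by
              rw [hcK, A.valuation.map_add_eq_of_lt_left (by rw [hvbz]; exact hgt)]
            have hc0 : cK ≠ 0 := by
              intro h
              rw [h, map_zero] at hvc
              exact hvz0 hvc.symm
            have h1c : (1:K) - cK = (1 - (z:K)) * (1 - (b:K)) := by
              rw [hcK]; ring
            have hτc : LamProj ℓ M m (galApp τ' (1 - cK)) ≠ 0 := by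
              rw [h1c, galApp_mul τ' hz1ne hb1ne, map_add, hτz, zero_add]
              exact hτ
            set cU : Kˣ := Units.mk0 cK hc0 with hcU
            have hvcU : A.valuation ((cU:K)) = A.valuation (z:K) := hvc
            have hσc : galu σ cU = 0 := hii cU (by rw [hvcU]; exact h2') hτc
            have hzc : galu σ (z * cU⁻¹) = 0 := by
              apply hAm
              rw [Units.val_mul, map_mul, Units.val_inv_eq_inv_val, map_inv₀, hvcU,
                mul_inv_cancel₀ hvz0]
            have hsplit := galu_mul σ (z * cU⁻¹) cU
            rw [inv_mul_cancel_right, hzc, hσc, add_zero] at hsplit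
            exact hsplit
          · exact hii z h2' hτz
  have hγinv : (1 : A.ValueGroup) ≤ γb⁻¹ := (one_le_inv₀ hγbpos).mpr hb.le
  refine ⟨Hring A γb⁻¹ hγinv, ?_, ?_⟩
  · intro x hx
    obtain ⟨hx1, hx2⟩ := (val_unit_iff _ x).mp hx
    obtain ⟨n1, hn1⟩ := hx1
    obtain ⟨n2, hn2⟩ := hx2
    rw [map_inv₀, inv_pow] at hn2
    rw [inv_pow] at hn1
    have hpow1 : (0:A.ValueGroup) < (γb ^ n1)⁻¹ :=
      zero_lt_iff.mpr (inv_ne_zero (ne_of_gt (pow_pos hγbpos n1)))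
    have hpow2 : (0:A.ValueGroup) < γb ^ n2 := pow_pos hγbpos n2
    rcases le_or_gt (A.valuation (x:K)) 1 with h | h
    · exact claim n2 x ((inv_le_inv₀ (val_pos A x) hpow2).mp hn2) h
    · have hlow : γb ^ n1 ≤ A.valuation ((x⁻¹ : Kˣ):K) := by
        rw [Units.val_inv_eq_inv_val, map_inv₀]
        have := (inv_le_inv₀ hpow1 (val_pos A x)).mpr hn1
        rwa [inv_inv] at this
      have hup : A.valuation ((x⁻¹ : Kˣ):K) ≤ 1 := by
        rw [Units.val_inv_eq_inv_val, map_inv₀]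
        exact (inv_le_one₀ (val_pos A x)).mpr h.le
      have key := claim n1 x⁻¹ hlow hup
      rw [galu_inv] at key
      exact neg_eq_zero.mp key
  · exact ⟨1, by rw [map_inv₀, pow_one]⟩

end CPAux
end CPAux5
/-- An element forming a C-pair with a valuative element projects into a
minimized decomposition group. -/
theorem stmt16 (ℓ : ℕ) [Fact ℓ.Prime] (m M : ℕ∞) (hm : 1 ≤ m) (hM : Mfun 1 m ≤ M)
    (K : Type*) [Field K] (σ' τ' : gal ℓ M K)
    (hσ' : IsValuative σ') (hC : IsCPair σ' τ') :
    IsValuative (galProj M m σ') ∧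
    ∃ V : ValuationSubring K, IsVsigma (galProj M m σ') V ∧
      galProj M m τ' ∈ decomp ℓ m V := by
  obtain ⟨A, hA⟩ := hσ'
  have hA' : CPAux.Inert σ' A := hA
  have hAm : CPAux.Inert (galProj M m σ') A := CPAux.inert_proj hA'
  refine ⟨⟨A, hAm⟩, CPAux.Vmax (galProj M m σ') A hAm,
    ⟨CPAux.inert_Vmax _ A hAm, fun W hW => CPAux.le_Vmax _ A hAm W hW⟩, ?_⟩
  intro x hx
  by_cases hx1 : (x:K) = 1
  · have hx1' : x = 1 := Units.ext hx1
    rw [hx1']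
    exact CPAux.galu_one _
  · by_contra hτx
    have hb0 : (1:K) - (x:K) ≠ 0 := sub_ne_zero.mpr fun h => hx1 h.symm
    set bu : Kˣ := Units.mk0 _ hb0 with hbu
    have hbuval : ((bu:K)) = 1 - (x:K) := rfl
    have hbV : (CPAux.Vmax (galProj M m σ') A hAm).valuation (bu:K) < 1 := by
      rw [hbuval, show (1:K) - (x:K) = -((x:K) - 1) from by ring, Valuation.map_neg]
      exact hx
    have hbA : A.valuation (bu:K) < 1 :=
      CPAux.val_lt_one_mono (CPAux.le_Vmax _ A hAm A hAm) bu hbV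
    have hτb : LamProj ℓ M m (galApp τ' (1 - (bu:K))) ≠ 0 := by
      rw [hbuval, show (1:K) - ((1:K) - (x:K)) = (x:K) from by ring, CPAux.galApp_unit]
      exact hτx
    obtain ⟨E, hE, hmem⟩ := CPAux.case2 hm hM A σ' τ' hA' hC bu hbA hτb
    have hmemV : ((bu:K))⁻¹ ∈ CPAux.Vmax (galProj M m σ') A hAm :=
      CPAux.le_Vmax _ A hAm E hE hmem
    have hle : (CPAux.Vmax (galProj M m σ') A hAm).valuation ((bu:K))⁻¹ ≤ 1 :=
      (ValuationSubring.valuation_le_one_iff _ _).2 hmemV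
    rw [map_inv₀] at hle
    have hge := (inv_le_one₀ (CPAux.val_pos _ bu)).mp hle
    exact absurd hbV (not_lt.mpr hge)
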